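/- arXiv:0809.0938 — 3 statements merged into one kernel-verified Lean document; each statement's English description precedes it below -/
import Mathlib

section
/- Let G be a finitely generated fully residually free group and let G₁, G₂ be finitely generated non-abelian subgroups of G such that H = G₁ ∩ G₂ has finite index in both G₁ and G₂. Then for every g in the subgroup ⟨G₁, G₂⟩ generated by G₁ and G₂, and for each j ∈ {1,2}, the intersection G_j ∩ gHg⁻¹ has finite index both in G_j and in gHg⁻¹. -/
open Pointwise

/-- A group `G` is fully residually free if for every finite set of nontrivial
elements there is a homomorphism to a free group not killing any of them. -/
def IsFullyResiduallyFree (G : Type*) [Group G] : Prop :=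
  ∀ s : Finset G, (∀ g ∈ s, g ≠ 1) →
    ∃ (ι : Type) (φ : G →* FreeGroup ι), ∀ g ∈ s, φ g ≠ 1

lemma conj_smul_self {G : Type*} [Group G] {K : Subgroup G} {g : G} (hg : g ∈ K) :
    ConjAct.toConjAct g • K = K := by
  ext x
  rw [Subgroup.mem_pointwise_smul_iff_inv_smul_mem, ← ConjAct.toConjAct_inv,
    ConjAct.toConjAct_smul, inv_inv]
  constructor
  · intro h
    have := K.mul_mem (K.mul_mem hg h) (K.inv_mem hg)
    simpa [mul_assoc] using this
  · intro h
    exact K.mul_mem (K.mul_mem (K.inv_mem hg) h) hg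

lemma comm_of_mem {G : Type*} [Group G] {H K : Subgroup G} {g : G} (hg : g ∈ K)
    (hc : Subgroup.Commensurable H K) : Subgroup.Commensurable (ConjAct.toConjAct g • H) H := by
  have h1 : Subgroup.Commensurable (ConjAct.toConjAct g • H) (ConjAct.toConjAct g • K) :=
    (Subgroup.Commensurable.commensurable_conj _).mp hc
  rw [conj_smul_self hg] at h1
  exact h1.trans hc.symm

theorem conj_intersection_finite_index
    {G : Type*} [Group G] (hG : Group.FG G) (hfrf : IsFullyResiduallyFree G)
    (G₁ G₂ : Subgroup G) (hG₁ : G₁.FG) (hG₂ : G₂.FG)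
    (hna₁ : ∃ a b : G, a ∈ G₁ ∧ b ∈ G₁ ∧ a * b ≠ b * a)
    (hna₂ : ∃ a b : G, a ∈ G₂ ∧ b ∈ G₂ ∧ a * b ≠ b * a)
    (h1 : (G₁ ⊓ G₂).relIndex G₁ ≠ 0) (h2 : (G₁ ⊓ G₂).relIndex G₂ ≠ 0) :
    ∀ g ∈ G₁ ⊔ G₂,
      ((G₁ ⊓ ConjAct.toConjAct g • (G₁ ⊓ G₂)).relIndex G₁ ≠ 0 ∧
        (G₁ ⊓ ConjAct.toConjAct g • (G₁ ⊓ G₂)).relIndex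
          (ConjAct.toConjAct g • (G₁ ⊓ G₂)) ≠ 0) ∧
      ((G₂ ⊓ ConjAct.toConjAct g • (G₁ ⊓ G₂)).relIndex G₂ ≠ 0 ∧
        (G₂ ⊓ ConjAct.toConjAct g • (G₁ ⊓ G₂)).relIndex
          (ConjAct.toConjAct g • (G₁ ⊓ G₂)) ≠ 0) := by
  set H := G₁ ⊓ G₂ with hH
  have hc1 : Subgroup.Commensurable H G₁ :=
    ⟨h1, by rw [Subgroup.relIndex_eq_one.mpr inf_le_left]; exact one_ne_zero⟩
  have hc2 : Subgroup.Commensurable H G₂ :=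
    ⟨h2, by rw [Subgroup.relIndex_eq_one.mpr inf_le_right]; exact one_ne_zero⟩
  have hsub : G₁ ⊔ G₂ ≤ Subgroup.Commensurable.commensurator H := by
    apply sup_le
    · intro g hg
      exact (Subgroup.Commensurable.commensurator_mem_iff H g).mpr (comm_of_mem hg hc1)
    · intro g hg
      exact (Subgroup.Commensurable.commensurator_mem_iff H g).mpr (comm_of_mem hg hc2)
  intro g hg
  have hgH : Subgroup.Commensurable (ConjAct.toConjAct g • H) H :=
    (Subgroup.Commensurable.commensurator_mem_iff H g).mp (hsub hg)
  have c1 : Subgroup.Commensurable (ConjAct.toConjAct g • H) G₁ := hgH.trans hc1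
  have c2 : Subgroup.Commensurable (ConjAct.toConjAct g • H) G₂ := hgH.trans hc2
  refine ⟨⟨?_, ?_⟩, ?_, ?_⟩
  · rw [inf_comm, Subgroup.inf_relIndex_right]; exact c1.1
  · rw [Subgroup.inf_relIndex_right]; exact c1.2
  · rw [inf_comm, Subgroup.inf_relIndex_right]; exact c2.1
  · rw [Subgroup.inf_relIndex_right]; exact c2.2
end

section
/- Let G be a finitely generated fully residually free group and let G₁, G₂ be finitely generated non-abelian subgroups of G such that H = G₁ ∩ G₂ has finite index in both G₁ and G₂. Then for every g in the subgroup ⟨G₁, G₂⟩ generated by G₁ and G₂, and for each j ∈ {1,2}, the intersection G_j ∩ gHg⁻¹ is non-abelian. -/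
open Pointwise
open scoped commutatorElement

private def sl2S : Matrix.SpecialLinearGroup (Fin 2) ℤ :=
  ⟨!![1, 1; 0, 1], by simp [Matrix.det_fin_two_of]⟩

private def sl2T : Matrix.SpecialLinearGroup (Fin 2) ℤ :=
  ⟨!![1, 0; 1, 1], by simp [Matrix.det_fin_two_of]⟩

private lemma coe_sl2S_pow (p : ℕ) :
    ((sl2S ^ p : Matrix.SpecialLinearGroup (Fin 2) ℤ) : Matrix (Fin 2) (Fin 2) ℤ)
      = !![1, (p : ℤ); 0, 1] := by
  induction p with
  | zero => simp [Matrix.one_fin_two]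
  | succ n ih =>
      rw [pow_succ, Matrix.SpecialLinearGroup.coe_mul, ih]
      show _ * (!![1, 1; 0, 1] : Matrix (Fin 2) (Fin 2) ℤ) = _
      rw [Matrix.mul_fin_two]
      push_cast
      ext i j
      fin_cases i <;> fin_cases j <;> simp <;> ring

private lemma coe_sl2T_pow (q : ℕ) :
    ((sl2T ^ q : Matrix.SpecialLinearGroup (Fin 2) ℤ) : Matrix (Fin 2) (Fin 2) ℤ)
      = !![1, 0; (q : ℤ), 1] := by
  induction q with
  | zero => simp [Matrix.one_fin_two]
  | succ n ih =>
      rw [pow_succ, Matrix.SpecialLinearGroup.coe_mul, ih]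
      show _ * (!![1, 0; 1, 1] : Matrix (Fin 2) (Fin 2) ℤ) = _
      rw [Matrix.mul_fin_two]
      push_cast
      ext i j
      fin_cases i <;> fin_cases j <;> simp <;> ring

private lemma sl2_pow_noncomm {p q : ℕ} (hp : 0 < p) (hq : 0 < q) :
    sl2S ^ p * sl2T ^ q ≠ sl2T ^ q * sl2S ^ p := by
  intro h
  have h' := congrArg
    (fun M : Matrix.SpecialLinearGroup (Fin 2) ℤ => (M : Matrix (Fin 2) (Fin 2) ℤ) 0 0) h
  simp only [Matrix.SpecialLinearGroup.coe_mul, coe_sl2S_pow, coe_sl2T_pow,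
    Matrix.mul_fin_two] at h'
  norm_num at h'
  rcases h' with h' | h'
  · omega
  · omega

private lemma comm_of_comm_gens {W : Type*} [Group W] {S : Set W}
    (hS : Subgroup.closure S = ⊤) (hc : ∀ a ∈ S, ∀ b ∈ S, a * b = b * a) (x y : W) :
    x * y = y * x := by
  have key : ∀ a ∈ S, ∀ z : W, a * z = z * a := by
    intro a ha z
    have hz : z ∈ Subgroup.closure S := by rw [hS]; trivial
    induction hz using Subgroup.closure_induction with
    | mem b hb => exact hc a ha b hb
    | one => simp
    | mul b c _ _ ihb ihc => rw [← mul_assoc, ihb, mul_assoc, ihc, mul_assoc]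
    | inv b _ ihb => exact (Commute.inv_right ihb : _)
  have hx : x ∈ Subgroup.closure S := by rw [hS]; trivial
  induction hx using Subgroup.closure_induction with
  | mem a ha => exact key a ha y
  | one => simp
  | mul a b _ _ iha ihb => rw [mul_assoc, ihb, ← mul_assoc, iha, mul_assoc]
  | inv a _ iha => exact (Commute.inv_left iha : _)

/-- A free group with an abelian subgroup of finite index is abelian. -/
private lemma free_group_virtually_abelian {W : Type*} [Group W] [IsFreeGroup W]
    (B : Subgroup W) (hB : B.index ≠ 0)
    (hcomm : ∀ x ∈ B, ∀ y ∈ B, x * y = y * x) (x y : W) : x * y = y * x := by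
  classical
  by_cases hsub : ∀ u v : IsFreeGroup.Generators W, u = v
  · refine comm_of_comm_gens (S := Set.range (IsFreeGroup.of : IsFreeGroup.Generators W → W))
      ?_ ?_ x y
    · have hof : (IsFreeGroup.of : IsFreeGroup.Generators W → W)
          = ⇑(IsFreeGroup.mulEquiv W) ∘ FreeGroup.of := rfl
      rw [hof, Set.range_comp, ← MulEquiv.coe_toMonoidHom, ← MonoidHom.map_closure,
        FreeGroup.closure_range_of, ← MonoidHom.range_eq_map, MonoidHom.range_eq_top]
      exact (IsFreeGroup.mulEquiv W).surjective
    · rintro a ⟨u, rfl⟩ b ⟨v, rfl⟩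
      rw [hsub u v]
  · push_neg at hsub
    obtain ⟨u, v, huv⟩ := hsub
    obtain ⟨p, hp0, -, hpB⟩ := Subgroup.exists_pow_mem_of_index_ne_zero hB (IsFreeGroup.of u)
    obtain ⟨q, hq0, -, hqB⟩ := Subgroup.exists_pow_mem_of_index_ne_zero hB (IsFreeGroup.of v)
    set f : IsFreeGroup.Generators W → Matrix.SpecialLinearGroup (Fin 2) ℤ :=
      fun w => if w = u then sl2S else if w = v then sl2T else 1 with hf
    set ψ : W →* Matrix.SpecialLinearGroup (Fin 2) ℤ := IsFreeGroup.lift f with hψ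
    have hu : ψ (IsFreeGroup.of u) = sl2S := by
      rw [hψ, IsFreeGroup.lift_of, hf]; simp
    have hv : ψ (IsFreeGroup.of v) = sl2T := by
      rw [hψ, IsFreeGroup.lift_of, hf]; simp [huv.symm]
    have hc := hcomm _ hpB _ hqB
    refine absurd ?_ (sl2_pow_noncomm hp0 hq0)
    calc sl2S ^ p * sl2T ^ q = ψ (IsFreeGroup.of u ^ p) * ψ (IsFreeGroup.of v ^ q) := by
          rw [map_pow, map_pow, hu, hv]
      _ = ψ (IsFreeGroup.of u ^ p * IsFreeGroup.of v ^ q) := by rw [map_mul]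
      _ = ψ (IsFreeGroup.of v ^ q * IsFreeGroup.of u ^ p) := by rw [hc]
      _ = sl2T ^ q * sl2S ^ p := by rw [map_mul, map_pow, map_pow, hu, hv]

/-- In a fully residually free group, a subgroup of finite index in a
non-abelian subgroup contains a non-commuting pair. -/
private lemma exists_noncomm_of_relindex_ne_zero {G : Type*} [Group G]
    (hfrf : IsFullyResiduallyFree G) {K B : Subgroup G} (hBK : B ≤ K)
    (hrel : B.relIndex K ≠ 0) {a b : G} (ha : a ∈ K) (hb : b ∈ K) (hab : a * b ≠ b * a) :
    ∃ x y : G, x ∈ B ∧ y ∈ B ∧ x * y ≠ y * x := by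
  by_contra hcon
  push_neg at hcon
  have hne : ⁅a, b⁆ ≠ 1 := fun h => hab (commutatorElement_eq_one_iff_mul_comm.mp h)
  obtain ⟨ι, φ, hφ⟩ := hfrf {⁅a, b⁆} (by simpa using hne)
  have hφab : φ ⁅a, b⁆ ≠ 1 := hφ _ (Finset.mem_singleton_self _)
  set W := K.map φ with hW
  set B' := (B.map φ).subgroupOf W with hB'
  have hBidx : B'.index ≠ 0 := by
    have h1 : (B.map φ).relIndex W ≠ 0 := by
      rw [hW, ← Subgroup.relIndex_comap (Subgroup.map φ B) φ K]
      intro h0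
      exact hrel (Subgroup.relIndex_eq_zero_of_le_left (Subgroup.le_comap_map φ B) h0)
    exact h1
  have hcomm' : ∀ x ∈ B', ∀ y ∈ B', x * y = y * x := by
    rintro ⟨x, hxW⟩ hx ⟨y, hyW⟩ hy
    rw [hB', Subgroup.mem_subgroupOf] at hx hy
    obtain ⟨x₀, hx₀B, rfl⟩ := hx
    obtain ⟨y₀, hy₀B, rfl⟩ := hy
    exact Subtype.ext (by
      show φ x₀ * φ y₀ = φ y₀ * φ x₀
      rw [← map_mul, ← map_mul, hcon x₀ y₀ hx₀B hy₀B])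
  have hmain := free_group_virtually_abelian B' hBidx hcomm'
    ⟨φ a, Subgroup.mem_map_of_mem φ ha⟩ ⟨φ b, Subgroup.mem_map_of_mem φ hb⟩
  apply hφab
  have h2 : φ a * φ b = φ b * φ a := congrArg Subtype.val hmain
  rw [commutatorElement_def]
  simp only [map_mul, map_inv]
  rw [h2]
  group

theorem conj_intersection_nonabelian
    {G : Type*} [Group G] (hG : Group.FG G) (hfrf : IsFullyResiduallyFree G)
    (G₁ G₂ : Subgroup G) (hG₁ : G₁.FG) (hG₂ : G₂.FG)
    (hna₁ : ∃ a b : G, a ∈ G₁ ∧ b ∈ G₁ ∧ a * b ≠ b * a)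
    (hna₂ : ∃ a b : G, a ∈ G₂ ∧ b ∈ G₂ ∧ a * b ≠ b * a)
    (h1 : (G₁ ⊓ G₂).relIndex G₁ ≠ 0) (h2 : (G₁ ⊓ G₂).relIndex G₂ ≠ 0) :
    ∀ g ∈ G₁ ⊔ G₂,
      (∃ a b : G, a ∈ G₁ ⊓ ConjAct.toConjAct g • (G₁ ⊓ G₂) ∧
        b ∈ G₁ ⊓ ConjAct.toConjAct g • (G₁ ⊓ G₂) ∧ a * b ≠ b * a) ∧
      (∃ a b : G, a ∈ G₂ ⊓ ConjAct.toConjAct g • (G₁ ⊓ G₂) ∧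
        b ∈ G₂ ⊓ ConjAct.toConjAct g • (G₁ ⊓ G₂) ∧ a * b ≠ b * a) := by
  classical
  have relIndex_smul : ∀ (g : ConjAct G) (A C : Subgroup G),
      (g • A).relIndex (g • C) = A.relIndex C :=
    fun g A C => (Nat.card_congr (Subgroup.quotConjEquiv A C g)).symm
  have smul_self : ∀ (x : G) (A : Subgroup G), x ∈ A → ConjAct.toConjAct x • A = A := by
    intro x A hx
    apply le_antisymm
    · intro y hy
      obtain ⟨s, hs, rfl⟩ := (Subgroup.mem_smul_pointwise_iff_exists y (ConjAct.toConjAct x) A).mp hy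
      rw [ConjAct.toConjAct_smul]
      exact A.mul_mem (A.mul_mem hx hs) (A.inv_mem hx)
    · intro y hy
      refine (Subgroup.mem_smul_pointwise_iff_exists y (ConjAct.toConjAct x) A).mpr ⟨x⁻¹ * y * x, ?_, ?_⟩
      · exact A.mul_mem (A.mul_mem (A.inv_mem hx) hy) hx
      · rw [ConjAct.toConjAct_smul]; group
  set H := G₁ ⊓ G₂ with hHdef
  have hcomm_le : ∀ (Gj : Subgroup G), H ≤ Gj → H.relIndex Gj ≠ 0 →
      Gj ≤ Subgroup.Commensurable.commensurator H := by
    intro Gj hle hrel x hx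
    rw [Subgroup.Commensurable.commensurator_mem_iff]
    set Hx := ConjAct.toConjAct x • H with hHx
    have hconjG : ConjAct.toConjAct x • Gj = Gj := smul_self x Gj hx
    have hA : Hx.relIndex Gj ≠ 0 := by
      rw [hHx, ← hconjG, relIndex_smul]
      exact hrel
    have hHxle : Hx ≤ Gj := by
      rw [hHx, ← hconjG]
      exact Subgroup.pointwise_smul_le_pointwise_smul_iff.mpr hle
    constructor
    · have hmul := Subgroup.relIndex_inf_mul_relIndex Hx H Gj
      rw [inf_eq_left.mpr hle] at hmul
      have hne : (Hx ⊓ H).relIndex Gj ≠ 0 := Subgroup.relIndex_inf_ne_zero hA hrel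
      intro h0
      apply hne
      rw [← hmul, h0, zero_mul]
    · have hmul := Subgroup.relIndex_inf_mul_relIndex H Hx Gj
      rw [inf_eq_left.mpr hHxle] at hmul
      have hne : (H ⊓ Hx).relIndex Gj ≠ 0 := Subgroup.relIndex_inf_ne_zero hrel hA
      intro h0
      apply hne
      rw [← hmul, h0, zero_mul]
  intro g hg
  have hgcomm : g ∈ Subgroup.Commensurable.commensurator H :=
    sup_le (hcomm_le G₁ inf_le_left h1) (hcomm_le G₂ inf_le_right h2) hg
  rw [Subgroup.Commensurable.commensurator_mem_iff] at hgcomm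
  set Hg := ConjAct.toConjAct g • H with hHg
  have c1 : Hg.relIndex H ≠ 0 := hgcomm.1
  have hBrel : ∀ (Gj : Subgroup G), H ≤ Gj → H.relIndex Gj ≠ 0 →
      (H ⊓ Hg).relIndex Gj ≠ 0 := by
    intro Gj hle hrel
    have h3 : (H ⊓ Hg).relIndex H ≠ 0 := by
      rw [inf_comm, Subgroup.inf_relIndex_right]
      exact c1
    have hmul := Subgroup.relIndex_mul_relIndex (H ⊓ Hg) H Gj inf_le_left hle
    intro h0
    exact Nat.mul_ne_zero h3 hrel (hmul.trans h0)
  constructor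
  · obtain ⟨a, b, haG, hbG, hab⟩ := hna₁
    obtain ⟨x, y, hx, hy, hxy⟩ := exists_noncomm_of_relindex_ne_zero hfrf
      (B := H ⊓ Hg) (K := G₁) (inf_le_left.trans inf_le_left)
      (hBrel G₁ inf_le_left h1) haG hbG hab
    obtain ⟨hxH, hxHg⟩ := Subgroup.mem_inf.mp hx
    obtain ⟨hyH, hyHg⟩ := Subgroup.mem_inf.mp hy
    exact ⟨x, y, Subgroup.mem_inf.mpr ⟨(Subgroup.mem_inf.mp hxH).1, hxHg⟩,
      Subgroup.mem_inf.mpr ⟨(Subgroup.mem_inf.mp hyH).1, hyHg⟩, hxy⟩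
  · obtain ⟨a, b, haG, hbG, hab⟩ := hna₂
    obtain ⟨x, y, hx, hy, hxy⟩ := exists_noncomm_of_relindex_ne_zero hfrf
      (B := H ⊓ Hg) (K := G₂) (inf_le_left.trans inf_le_right)
      (hBrel G₂ inf_le_right h2) haG hbG hab
    obtain ⟨hxH, hxHg⟩ := Subgroup.mem_inf.mp hx
    obtain ⟨hyH, hyHg⟩ := Subgroup.mem_inf.mp hy
    exact ⟨x, y, Subgroup.mem_inf.mpr ⟨(Subgroup.mem_inf.mp hxH).2, hxHg⟩,
      Subgroup.mem_inf.mpr ⟨(Subgroup.mem_inf.mp hyH).2, hyHg⟩, hxy⟩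
end

section
/- Let G be a fully residually free group and let K be an abelian subgroup of G of finite index. Then G is abelian. -/
open Pointwise

namespace FRF

open FreeGroup List

variable {α : Type} [DecidableEq α]

set_option linter.unusedSectionVars false





/-- adjacency relation for reduced words -/
def R : (α × Bool) → (α × Bool) → Prop := fun a b => ¬(a.1 = b.1 ∧ a.2 = !b.2)

lemma chain'_reduce (L : List (α × Bool)) : List.Chain' R (reduce L) := by
  induction L with
  | nil => simp; exact List.isChain_nil
  | cons x L ih =>
    rw [reduce.cons]
    cases h : reduce L with
    | nil => simp; exact List.isChain_singleton _
    | cons y t =>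
      rw [h] at ih
      show List.Chain' R (if x.1 = y.1 ∧ x.2 = !y.2 then t else x :: y :: t)
      by_cases hc : x.1 = y.1 ∧ x.2 = !y.2
      · rw [if_pos hc]; exact ih.tail
      · rw [if_neg hc]
        exact List.isChain_cons_cons.2 ⟨hc, ih⟩

lemma reduce_eq_self_of_chain {L : List (α × Bool)} (h : List.Chain' R L) :
    reduce L = L := by
  induction L with
  | nil => rfl
  | cons x L ih =>
    have hL : List.Chain' R L := h.tail
    rw [reduce.cons, ih hL]
    cases L with
    | nil => rfl
    | cons y t =>
      have hr : R x y := (List.isChain_cons_cons.1 h).1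
      show (if x.1 = y.1 ∧ x.2 = !y.2 then t else x :: y :: t) = x :: y :: t
      exact if_neg hr

lemma toWord_chain (x : FreeGroup α) : List.Chain' R x.toWord := by
  rw [← reduce_toWord]; exact chain'_reduce _








lemma chain'_flat {U : List (α × Bool)} (hU : List.Chain' R U) (hne : U ≠ [])
    (hcyc : ∀ s ∈ U.getLast?, ∀ t ∈ U.head?, R s t) (n : ℕ) :
    List.Chain' R (List.flatten (List.replicate n U)) ∧
    (List.flatten (List.replicate n U)).length = n * U.length ∧
    (1 ≤ n → (List.flatten (List.replicate n U)).head? = U.head? ∧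
      (List.flatten (List.replicate n U)).getLast? = U.getLast?) := by
  induction n with
  | zero => simp; exact List.isChain_nil
  | succ n ih =>
    obtain ⟨ih1, ih2, ih3⟩ := ih
    rw [List.replicate_succ, List.flatten_cons]
    have hchain : List.Chain' R (U ++ List.flatten (List.replicate n U)) := by
      refine List.isChain_append.2 ⟨hU, ih1, ?_⟩
      intro a ha b hb
      rcases Nat.eq_zero_or_pos n with h0 | h0
      · subst h0; simp at hb
      · rw [(ih3 h0).1] at hb
        exact hcyc a ha b hb
    refine ⟨hchain, by simp [ih2, Nat.succ_mul, Nat.add_comm], fun _ => ⟨?_, ?_⟩⟩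
    · exact List.head?_append_of_ne_nil _ hne
    · rcases Nat.eq_zero_or_pos n with h0 | h0
      · subst h0; simp
      · have hfne : List.flatten (List.replicate n U) ≠ [] := by
          intro h
          rw [h] at ih2
          have h2 : (0 : ℕ) = n * U.length := by simpa using ih2
          rcases Nat.mul_eq_zero.1 h2.symm with h3 | h3
          · exact absurd h3 (Nat.pos_iff_ne_zero.1 h0)
          · exact hne (List.length_eq_zero_iff.1 h3)
        rw [List.getLast?_append_of_ne_nil _ hfne]
        exact (ih3 h0).2

/-- cyclic decomposition -/
lemma cyc_decomp (x : FreeGroup α) : ∃ c u : FreeGroup α,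
    x = c * u * c⁻¹ ∧
    (∀ s ∈ u.toWord.getLast?, ∀ t ∈ u.toWord.head?, R s t) ∧
    x.toWord = c.toWord ++ u.toWord ++ (c⁻¹).toWord := by
  suffices H : ∀ N : ℕ, ∀ x : FreeGroup α, x.toWord.length ≤ N → ∃ c u : FreeGroup α,
      x = c * u * c⁻¹ ∧
      (∀ s ∈ u.toWord.getLast?, ∀ t ∈ u.toWord.head?, R s t) ∧
      x.toWord = c.toWord ++ u.toWord ++ (c⁻¹).toWord from H _ x le_rfl
  intro N
  induction N with
  | zero =>
    intro x hx
    refine ⟨1, x, by group, ?_, by simp⟩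
    have : x.toWord = [] := List.length_eq_zero_iff.1 (Nat.le_zero.1 hx)
    simp [this]
  | succ N ihN =>
    intro x hx
    by_cases hc : ∀ s ∈ x.toWord.getLast?, ∀ t ∈ x.toWord.head?, R s t
    · exact ⟨1, x, by group, hc, by simp⟩
    · push_neg at hc
      obtain ⟨s, hs, t, ht, hst⟩ := hc
      simp only [R, not_not] at hst
      -- x.toWord = t :: M ++ [s]
      cases hl : x.toWord with
      | nil => rw [hl] at ht; simp at ht
      | cons t' M' =>
        rw [hl] at ht hs
        have htt : t' = t := by simpa using ht
        subst htt
        have hM'ne : M' ≠ [] := by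
          intro h
          subst h
          have : s = t' := by simpa [eq_comm] using hs
          subst this
          have := hst.2
          simp at this
        rcases (List.eq_nil_or_concat M') with h | ⟨M, s', hMs⟩
        · exact absurd h hM'ne
        subst hMs
        rw [List.concat_eq_append] at hl hs hM'ne
        have hss : s' = s := by
          have h1 : (t' :: (M ++ [s'])).getLast? = some s' := by
            rw [← List.cons_append, List.getLast?_concat]
          rw [h1] at hs
          simpa [eq_comm] using hs
        rw [← hss] at hst
        have hxchain : List.Chain' R (t' :: (M ++ [s'])) := by
          rw [← hl]; exact toWord_chain x
        have hMchain : List.Chain' R M :=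
          hxchain.tail.prefix (List.prefix_append _ _)
        set y : FreeGroup α := mk M with hy
        have hyword : y.toWord = M := by
          rw [hy, toWord_mk, reduce_eq_self_of_chain hMchain]
        have hylen : y.toWord.length ≤ N := by
          have h2 : x.toWord.length = M.length + 2 := by rw [hl]; simp
          rw [hyword]; omega
        obtain ⟨c', u, hdec, hcyc', hw'⟩ := ihN y hylen
        rw [hyword] at hw'
        have hIC' : (c'⁻¹).toWord = invRev c'.toWord := toWord_inv c'
        have hst' : s' = (t'.1, !t'.2) := Prod.ext hst.1 hst.2
        set g : FreeGroup α := mk [t'] with hg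
        have hginv : g⁻¹ = mk [s'] := by
          rw [hg, inv_mk]
          congr 1
          simp [invRev, hst']
        have hx : x = g * y * g⁻¹ := by
          rw [hginv, hg, hy, mul_mk, mul_mk]
          conv_lhs => rw [← mk_toWord (x := x), hl]
          congr 1
        have hC'chain : List.Chain' R (t' :: c'.toWord) := by
          have h1 : List.Chain' R ((t' :: M) ++ [s']) := by
            rw [List.cons_append]; exact hxchain
          have h2 : (t' :: c'.toWord) <+: (t' :: M) :=
            ⟨u.toWord ++ (c'⁻¹).toWord, by
              rw [List.cons_append, hw']; simp [List.append_assoc]⟩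
          exact (h1.prefix (List.prefix_append _ _)).prefix h2
        have hcw : (g * c').toWord = t' :: c'.toWord := by
          conv_lhs => rw [hg, ← mk_toWord (x := c'), mul_mk]
          rw [toWord_mk]
          have h3 : ([t'] : List (α × Bool)) ++ c'.toWord = t' :: c'.toWord := by simp
          rw [h3, reduce_eq_self_of_chain hC'chain]
        have hcwi : ((g * c')⁻¹).toWord = invRev (c'.toWord) ++ [s'] := by
          rw [toWord_inv, hcw]
          simp [invRev, hst']
        refine ⟨g * c', u, ?_, hcyc', ?_⟩
        · rw [hx, hdec]; group
        · rw [List.concat_eq_append, hcw, hcwi, hw', hIC']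
          simp [List.append_assoc]








lemma pow_word {c u x : FreeGroup α} (hx : x = c * u * c⁻¹)
    (hcyc : ∀ s ∈ u.toWord.getLast?, ∀ t ∈ u.toWord.head?, R s t)
    (hw : x.toWord = c.toWord ++ u.toWord ++ (c⁻¹).toWord)
    (hne : u.toWord ≠ []) (n : ℕ) (hn : 1 ≤ n) :
    (x ^ n).toWord =
      c.toWord ++ List.flatten (List.replicate n u.toWord) ++ (c⁻¹).toWord := by
  obtain ⟨hf1, hf2, hf3⟩ := chain'_flat (toWord_chain u) hne hcyc n
  obtain ⟨hh, hg⟩ := hf3 hn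
  have hfne : List.flatten (List.replicate n u.toWord) ≠ [] := by
    intro h0
    rw [h0] at hf2
    rcases Nat.mul_eq_zero.1 hf2.symm with h3 | h3
    · omega
    · exact hne (List.length_eq_zero_iff.1 h3)
  have hun : u ^ n = mk (List.flatten (List.replicate n u.toWord)) := by
    conv_lhs => rw [← mk_toWord (x := u)]
    rw [pow_mk]
  have hxn : mk (c.toWord ++ List.flatten (List.replicate n u.toWord) ++ (c⁻¹).toWord)
      = x ^ n := by
    rw [← mul_mk, ← mul_mk, mk_toWord, mk_toWord, ← hun, hx, conj_pow]
  -- chain facts from x's word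
  have hXchain : List.Chain' R (c.toWord ++ (u.toWord ++ (c⁻¹).toWord)) := by
    rw [← List.append_assoc, ← hw]; exact toWord_chain x
  obtain ⟨hCchain, hUIC, hJ1⟩ := List.isChain_append.1 hXchain
  obtain ⟨hUchain, hICchain, hJ2⟩ := List.isChain_append.1 hUIC
  have hchain : List.Chain' R
      (c.toWord ++ (List.flatten (List.replicate n u.toWord) ++ (c⁻¹).toWord)) := by
    refine List.isChain_append.2 ⟨hCchain, List.isChain_append.2 ⟨hf1, hICchain, ?_⟩, ?_⟩
    · intro a ha b hb
      rw [hg] at ha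
      exact hJ2 a ha b hb
    · intro a ha b hb
      rw [List.head?_append_of_ne_nil _ hfne, hh] at hb
      apply hJ1 a ha b
      rw [List.head?_append_of_ne_nil _ hne]
      exact hb
  rw [← hxn, toWord_mk, List.append_assoc, reduce_eq_self_of_chain hchain]

lemma eq_one_of_pow_eq_one {n : ℕ} (hn : n ≠ 0) {x : FreeGroup α}
    (h : x ^ n = 1) : x = 1 := by
  obtain ⟨c, u, hxd, hcu, hwx⟩ := cyc_decomp x
  by_cases hu : u.toWord = []
  · rw [hxd, toWord_eq_nil_iff.1 hu]; group
  · exfalso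
    have hwxn := pow_word hxd hcu hwx hu n (Nat.one_le_iff_ne_zero.2 hn)
    rw [h, toWord_one] at hwxn
    have h1 := List.append_eq_nil_iff.1 hwxn.symm
    have h2 := List.append_eq_nil_iff.1 h1.1
    obtain ⟨hf1, hf2, -⟩ := chain'_flat (toWord_chain u) hu hcu n
    rw [h2.2] at hf2
    rcases Nat.mul_eq_zero.1 hf2.symm with h3 | h3
    · exact hn h3
    · exact hu (List.length_eq_zero_iff.1 h3)

theorem pow_left_inj {n : ℕ} (hn : n ≠ 0) {x y : FreeGroup α}
    (h : x ^ n = y ^ n) : x = y := by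
  obtain ⟨c, u, hxd, hcu, hwx⟩ := cyc_decomp x
  obtain ⟨d, v, hyd, hcv, hwy⟩ := cyc_decomp y
  by_cases hu : u.toWord = []
  · have hx1 : x = 1 := by rw [hxd, toWord_eq_nil_iff.1 hu]; group
    have hy1 : y = 1 := eq_one_of_pow_eq_one hn (by rw [← h, hx1, one_pow])
    rw [hx1, hy1]
  by_cases hv : v.toWord = []
  · have hy1 : y = 1 := by rw [hyd, toWord_eq_nil_iff.1 hv]; group
    have hx1 : x = 1 := eq_one_of_pow_eq_one hn (by rw [h, hy1, one_pow])
    rw [hx1, hy1]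
  have hn1 : 1 ≤ n := Nat.one_le_iff_ne_zero.2 hn
  have hwxn := pow_word hxd hcu hwx hu n hn1
  have hwyn := pow_word hyd hcv hwy hv n hn1
  have hwxn2 := pow_word hxd hcu hwx hu (n * 2) (by omega)
  have hwyn2 := pow_word hyd hcv hwy hv (n * 2) (by omega)
  have hE : (x ^ n).toWord = (y ^ n).toWord := by rw [h]
  have hE2 : (x ^ (n * 2)).toWord = (y ^ (n * 2)).toWord := by
    rw [pow_mul, pow_mul, h]
  rw [hwxn, hwyn] at hE
  rw [hwxn2, hwyn2] at hE2
  -- lengths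
  have lCi : (c⁻¹).toWord.length = c.toWord.length := by rw [toWord_inv, invRev_length]
  have lDi : (d⁻¹).toWord.length = d.toWord.length := by rw [toWord_inv, invRev_length]
  have lu := (chain'_flat (toWord_chain u) hu hcu n).2.1
  have lv := (chain'_flat (toWord_chain v) hv hcv n).2.1
  have lu2 := (chain'_flat (toWord_chain u) hu hcu (n * 2)).2.1
  have lv2 := (chain'_flat (toWord_chain v) hv hcv (n * 2)).2.1
  have hL1 := congrArg List.length hE
  have hL2 := congrArg List.length hE2
  simp only [List.length_append, lCi, lDi, lu, lv, lu2, lv2] at hL1 hL2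
  have hflen : n * u.toWord.length = n * v.toWord.length := by
    have e1 : n * 2 * u.toWord.length = (n * u.toWord.length) * 2 := by ring
    have e2 : n * 2 * v.toWord.length = (n * v.toWord.length) * 2 := by ring
    rw [e1, e2] at hL2
    omega
  have hulen : u.toWord.length = v.toWord.length :=
    Nat.eq_of_mul_eq_mul_left (by omega) hflen
  have hclen : c.toWord.length = d.toWord.length := by omega
  have hE' : c.toWord ++ ((List.replicate n u.toWord).flatten ++ (c⁻¹).toWord) =
      d.toWord ++ ((List.replicate n v.toWord).flatten ++ (d⁻¹).toWord) := by
    simpa [List.append_assoc] using hE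
  obtain ⟨hCD, hrest⟩ := List.append_inj hE' hclen
  obtain ⟨hAB, hICID⟩ := List.append_inj hrest (by rw [lu, lv, hflen])
  obtain ⟨k, rfl⟩ : ∃ k, n = k + 1 := ⟨n - 1, by omega⟩
  rw [List.replicate_succ, List.flatten_cons, List.replicate_succ, List.flatten_cons] at hAB
  obtain ⟨hUV, -⟩ := List.append_inj hAB hulen
  have hu' : u = v := toWord_injective hUV
  have hc' : c = d := toWord_injective hCD
  rw [hxd, hyd, hu', hc']


lemma commute_of_pow_commute {x y : FreeGroup α} {n m : ℕ} (hn : n ≠ 0) (hm : m ≠ 0)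
    (h : x ^ n * y ^ m = y ^ m * x ^ n) : x * y = y * x := by
  have h1 : (y ^ m * x * (y ^ m)⁻¹) ^ n = x ^ n := by
    rw [conj_pow, mul_inv_eq_iff_eq_mul]
    exact h.symm
  have h2 : y ^ m * x * (y ^ m)⁻¹ = x := pow_left_inj hn h1
  rw [mul_inv_eq_iff_eq_mul] at h2
  have h4 : (x * y * x⁻¹) ^ m = y ^ m := by
    rw [conj_pow, mul_inv_eq_iff_eq_mul]
    exact h2.symm
  have h5 : x * y * x⁻¹ = y := pow_left_inj hm h4
  rw [mul_inv_eq_iff_eq_mul] at h5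
  exact h5

end FRF

theorem abelian_of_abelian_finite_index
    {G : Type*} [Group G] (hfrf : IsFullyResiduallyFree G)
    (K : Subgroup G) (hab : ∀ a ∈ K, ∀ b ∈ K, a * b = b * a)
    (hind : K.index ≠ 0) :
    ∀ a b : G, a * b = b * a := by
  intro a b
  obtain ⟨n, hn0, -, hna⟩ := Subgroup.exists_pow_mem_of_index_ne_zero hind a
  obtain ⟨m, hm0, -, hmb⟩ := Subgroup.exists_pow_mem_of_index_ne_zero hind b
  by_contra hne
  have hg1 : a * b * a⁻¹ * b⁻¹ ≠ 1 := by
    intro h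
    apply hne
    have h' : (a * b) * (b * a)⁻¹ = 1 := by rw [mul_inv_rev, ← mul_assoc]; exact h
    exact mul_inv_eq_one.1 h'
  obtain ⟨ι, φ, hφ⟩ := hfrf {a * b * a⁻¹ * b⁻¹} (by simpa using hg1)
  letI : DecidableEq ι := Classical.decEq ι
  have hcomK : a ^ n * b ^ m = b ^ m * a ^ n := hab _ hna _ hmb
  have hcom : φ a ^ n * φ b ^ m = φ b ^ m * φ a ^ n := by
    have h1 := congrArg φ hcomK
    simpa [map_mul, map_pow] using h1
  have hxy : φ a * φ b = φ b * φ a :=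
    FRF.commute_of_pow_commute (by omega) (by omega) hcom
  apply hφ _ (Finset.mem_singleton_self _)
  have h2 : φ (a * b * a⁻¹ * b⁻¹) = φ a * φ b * (φ a)⁻¹ * (φ b)⁻¹ := by
    simp [map_mul]
  rw [h2, hxy]
  group
end
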